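/- Let $\Lambda = \{\lambda_n\}$ be a nondecreasing sequence of positive reals with $\lambda_1 > 1$ and $\sum_n 1/\lambda_n = \infty$, and let $p(n) \uparrow \infty$. If $\limsup_{n\to\infty} \sup_{1 \leq m \leq 2^n} \frac{m^{1/p(n)}}{\sum_{j=1}^m (1/\lambda_j)} = \infty$, then there exists a function $f : \mathbb{R}^2 \to \mathbb{R}$, 1-periodic in each variable, such that $f \in \Lambda^{\#}BV$ but $f \notin BV^{\#}(p(n) \uparrow \infty)$. -/

import Mathlib

/-- A finite collection of `m` nonoverlapping open subintervals `(a i, b i)` of `[0,1]`. -/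
def Nonoverlap (m : ℕ) (a b : ℕ → ℝ) : Prop :=
  (∀ i < m, 0 ≤ a i ∧ a i < b i ∧ b i ≤ 1) ∧
  ∀ i < m, ∀ j < m, i ≠ j → Set.Ioo (a i) (b i) ∩ Set.Ioo (a j) (b j) = ∅

/-- `Λ^{#}V_1(f) ≤ M`: all Waterman-type sums in the first variable, with a separate
point `y i` for each interval, are bounded by `M`. -/
def LamSharpV1 (lam : ℕ → ℝ) (f : ℝ → ℝ → ℝ) (M : ℝ) : Prop :=
  ∀ (m : ℕ) (a b y : ℕ → ℝ), Nonoverlap m a b → (∀ i < m, y i ∈ Set.Icc (0:ℝ) 1) →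
    ∑ i ∈ Finset.range m, |f (b i) (y i) - f (a i) (y i)| / lam i ≤ M

/-- `Λ^{#}V_2(f) ≤ M`: the symmetric condition in the second variable. -/
def LamSharpV2 (lam : ℕ → ℝ) (f : ℝ → ℝ → ℝ) (M : ℝ) : Prop :=
  ∀ (m : ℕ) (a b x : ℕ → ℝ), Nonoverlap m a b → (∀ i < m, x i ∈ Set.Icc (0:ℝ) 1) →
    ∑ i ∈ Finset.range m, |f (x i) (b i) - f (x i) (a i)| / lam i ≤ M

/-- The class `Λ^{#}BV`. -/
def LamSharpBV (lam : ℕ → ℝ) (f : ℝ → ℝ → ℝ) : Prop :=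
  ∃ M : ℝ, LamSharpV1 lam f M ∧ LamSharpV2 lam f M

/-- `V_1^{#}(f, p(n) ↑ ∞) ≤ M`: for every `n`, every collection of nonoverlapping
intervals of lengths at least `2⁻ⁿ` and every choice of points `y i`, the `ℓ^{p(n)}`
sum of increments in the first variable is at most `M`. -/
def BVSharpV1 (p : ℕ → ℝ) (f : ℝ → ℝ → ℝ) (M : ℝ) : Prop :=
  ∀ (n m : ℕ) (a b y : ℕ → ℝ), Nonoverlap m a b →
    (∀ i < m, 1 / 2 ^ n ≤ b i - a i) →
    (∀ i < m, y i ∈ Set.Icc (0:ℝ) 1) →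
    (∑ i ∈ Finset.range m, |f (b i) (y i) - f (a i) (y i)| ^ p n) ^ (1 / p n) ≤ M

/-- `V_2^{#}(f, p(n) ↑ ∞) ≤ M`: the symmetric condition in the second variable. -/
def BVSharpV2 (p : ℕ → ℝ) (f : ℝ → ℝ → ℝ) (M : ℝ) : Prop :=
  ∀ (n m : ℕ) (a b x : ℕ → ℝ), Nonoverlap m a b →
    (∀ i < m, 1 / 2 ^ n ≤ b i - a i) →
    (∀ i < m, x i ∈ Set.Icc (0:ℝ) 1) →
    (∑ i ∈ Finset.range m, |f (x i) (b i) - f (x i) (a i)| ^ p n) ^ (1 / p n) ≤ M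

/-- The class `BV^{#}(p(n) ↑ ∞)`. -/
def BVSharp (p : ℕ → ℝ) (f : ℝ → ℝ → ℝ) : Prop :=
  ∃ M : ℝ, BVSharpV1 p f M ∧ BVSharpV2 p f M


noncomputable def Gfun (h : ℝ) (mk qk : ℕ) (x : ℝ) : ℝ :=
  if ∃ j : ℕ, j < qk ∧ Int.fract x = (2 * (j:ℝ) + 1) / (mk : ℝ) then h else 0

open Classical in
noncomputable def Ffun (H : ℕ → ℝ) (mk qk : ℕ → ℕ) (x y : ℝ) : ℝ :=
  if hy : ∃ k : ℕ, Int.fract y = 1 / ((k : ℝ) + 2) then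
    Gfun (H hy.choose) (mk hy.choose) (qk hy.choose) x else 0

lemma abs_Gfun_le {h : ℝ} (hh : 0 ≤ h) (mk qk : ℕ) (x : ℝ) :
    |Gfun h mk qk x| ≤ h := by
  unfold Gfun; split <;> simp [abs_of_nonneg hh, hh]

lemma Gfun_sub_le {h : ℝ} (hh : 0 ≤ h) (mk qk : ℕ) (x1 x2 : ℝ) :
    |Gfun h mk qk x1 - Gfun h mk qk x2| ≤
      (if ∃ j : ℕ, j < qk ∧ Int.fract x1 = (2 * (j:ℝ) + 1) / (mk : ℝ) then h else 0) +
      (if ∃ j : ℕ, j < qk ∧ Int.fract x2 = (2 * (j:ℝ) + 1) / (mk : ℝ) then h else 0) := by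
  unfold Gfun
  split <;> split <;> simp [abs_of_nonneg hh, hh]

lemma yk_inj {k k' : ℕ} (h : (1:ℝ) / ((k:ℝ) + 2) = 1 / ((k':ℝ) + 2)) : k = k' := by
  have h2 : ((k:ℝ) + 2) ≠ 0 := by positivity
  have h3 : ((k':ℝ) + 2) ≠ 0 := by positivity
  field_simp at h
  have h4 : (k:ℝ) = k' := by linarith
  exact_mod_cast h4

lemma fract_yk (k : ℕ) : Int.fract ((1:ℝ) / ((k:ℝ) + 2)) = 1 / ((k:ℝ) + 2) := by
  rw [Int.fract_eq_self]
  constructor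
  · positivity
  · rw [div_lt_one (by positivity)]
    have : (0:ℝ) ≤ (k:ℝ) := Nat.cast_nonneg k
    linarith

lemma Ffun_eval (H : ℕ → ℝ) (mk qk : ℕ → ℕ) (x : ℝ) (k : ℕ) :
    Ffun H mk qk x (1 / ((k:ℝ) + 2)) = Gfun (H k) (mk k) (qk k) x := by
  have hy : ∃ k' : ℕ, Int.fract ((1:ℝ) / ((k:ℝ) + 2)) = 1 / ((k':ℝ) + 2) :=
    ⟨k, fract_yk k⟩
  have hc : hy.choose = k :=
    (yk_inj ((fract_yk k).symm.trans hy.choose_spec)).symm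
  rw [Ffun, dif_pos hy, hc]

lemma Gfun_per (h : ℝ) (mk qk : ℕ) (x : ℝ) :
    Gfun h mk qk (x + 1) = Gfun h mk qk x := by
  unfold Gfun
  simp only [Int.fract_add_one]

lemma Ffun_per1 (H : ℕ → ℝ) (mk qk : ℕ → ℕ) (x y : ℝ) :
    Ffun H mk qk (x + 1) y = Ffun H mk qk x y := by
  unfold Ffun
  by_cases hy : ∃ k : ℕ, Int.fract y = 1 / ((k : ℝ) + 2)
  · rw [dif_pos hy, dif_pos hy, Gfun_per]
  · rw [dif_neg hy, dif_neg hy]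

lemma Ffun_per2 (H : ℕ → ℝ) (mk qk : ℕ → ℕ) (x y : ℝ) :
    Ffun H mk qk x (y + 1) = Ffun H mk qk x y := by
  unfold Ffun
  by_cases hy : ∃ k : ℕ, Int.fract y = 1 / ((k : ℝ) + 2)
  · have hy1 : ∃ k : ℕ, Int.fract (y + 1) = 1 / ((k : ℝ) + 2) := by
      simpa [Int.fract_add_one] using hy
    rw [dif_pos hy1, dif_pos hy]
    have hcc : hy1.choose = hy.choose := by
      apply yk_inj
      rw [← hy1.choose_spec, ← hy.choose_spec, Int.fract_add_one]
    rw [hcc]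
  · have hy1 : ¬ ∃ k : ℕ, Int.fract (y + 1) = 1 / ((k : ℝ) + 2) := by
      simpa [Int.fract_add_one] using hy
    rw [dif_neg hy1, dif_neg hy]


lemma nonoverlap_a_inj {m : ℕ} {a b : ℕ → ℝ} (h : Nonoverlap m a b) :
    ∀ i < m, ∀ j < m, a i = a j → i = j := by
  intro i hi j hj hab
  by_contra hne
  obtain ⟨hia, hib, _⟩ := h.1 i hi
  obtain ⟨hja, hjb, _⟩ := h.1 j hj
  have h2 := h.2 i hi j hj hne
  have hmin : a i < min (b i) (b j) := lt_min hib (hab ▸ hjb)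
  have hz : (a i + min (b i) (b j)) / 2 ∈ Set.Ioo (a i) (b i) ∩ Set.Ioo (a j) (b j) := by
    have h3 := min_le_left (b i) (b j)
    have h4 := min_le_right (b i) (b j)
    constructor
    · constructor <;> [linarith; linarith]
    · rw [← hab]; constructor <;> [linarith; linarith]
  rw [h2] at hz
  exact hz

lemma nonoverlap_b_inj {m : ℕ} {a b : ℕ → ℝ} (h : Nonoverlap m a b) :
    ∀ i < m, ∀ j < m, b i = b j → i = j := by
  intro i hi j hj hab
  by_contra hne
  obtain ⟨hia, hib, _⟩ := h.1 i hi
  obtain ⟨hja, hjb, _⟩ := h.1 j hj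
  have h2 := h.2 i hi j hj hne
  have hmax : max (a i) (a j) < b i := max_lt hib (hab ▸ hjb)
  have hz : (max (a i) (a j) + b i) / 2 ∈ Set.Ioo (a i) (b i) ∩ Set.Ioo (a j) (b j) := by
    have h3 := le_max_left (a i) (a j)
    have h4 := le_max_right (a i) (a j)
    constructor
    · constructor <;> [linarith; linarith]
    · rw [← hab]; constructor <;> [linarith; linarith]
  rw [h2] at hz
  exact hz

lemma nonoverlap_fract_a {m : ℕ} {a b : ℕ → ℝ} (h : Nonoverlap m a b) :
    ∀ i < m, ∀ j < m, Int.fract (a i) = Int.fract (a j) → i = j := by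
  intro i hi j hj hf
  obtain ⟨hia, hib, hib1⟩ := h.1 i hi
  obtain ⟨hja, hjb, hjb1⟩ := h.1 j hj
  rw [Int.fract_eq_self.mpr ⟨hia, lt_of_lt_of_le hib hib1⟩,
      Int.fract_eq_self.mpr ⟨hja, lt_of_lt_of_le hjb hjb1⟩] at hf
  exact nonoverlap_a_inj h i hi j hj hf

lemma nonoverlap_fract_b {m : ℕ} {a b : ℕ → ℝ} (h : Nonoverlap m a b) :
    ∀ i < m, ∀ j < m, Int.fract (b i) = Int.fract (b j) → i = j := by
  intro i hi j hj hf
  obtain ⟨hia, hib, hib1⟩ := h.1 i hi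
  obtain ⟨hja, hjb, hjb1⟩ := h.1 j hj
  have key : ∀ x : ℝ, 0 ≤ x → x ≤ 1 → Int.fract x = if x = 1 then 0 else x := by
    intro x hx0 hx1
    rcases eq_or_lt_of_le hx1 with h1 | h1
    · simp [h1]
    · rw [Int.fract_eq_self.mpr ⟨hx0, h1⟩]
      simp [ne_of_lt h1]
  rw [key _ (le_of_lt (lt_of_le_of_lt hia hib)) hib1,
      key _ (le_of_lt (lt_of_le_of_lt hja hjb)) hjb1] at hf
  have hbi0 : 0 < b i := lt_of_le_of_lt hia hib
  have hbj0 : 0 < b j := lt_of_le_of_lt hja hjb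
  have : b i = b j := by
    by_cases e1 : b i = 1 <;> by_cases e2 : b j = 1 <;> simp [e1, e2] at hf <;>
      first
      | (rw [e1, e2])
      | (exact absurd hf.symm (ne_of_gt hbj0))
      | (exact absurd hf (ne_of_gt hbi0))
      | (exact hf)
  exact nonoverlap_b_inj h i hi j hj this

lemma antitone_sum_le (c : ℕ → ℝ) (hmono : ∀ i j, i ≤ j → c j ≤ c i)
    (T : Finset ℕ) :
    ∑ i ∈ T, c i ≤ ∑ j ∈ Finset.range T.card, c j := by
  induction' hn : T.card with n ih generalizing T
  · simp [Finset.card_eq_zero.mp hn]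
  · have hne : T.Nonempty := Finset.card_pos.mp (by omega)
    have hmem : T.max' hne ∈ T := T.max'_mem hne
    set t := T.max' hne with ht
    have hcard : (T.erase t).card = n := by rw [Finset.card_erase_of_mem hmem, hn]; rfl
    have hnt : n ≤ t := by
      by_contra hc
      push_neg at hc
      have hsub : T ⊆ Finset.range (t + 1) := fun x hx =>
        Finset.mem_range.mpr (Nat.lt_succ_of_le (T.le_max' x hx))
      have := Finset.card_le_card hsub
      rw [Finset.card_range, hn] at this
      omega
    calc ∑ i ∈ T, c i = c t + ∑ i ∈ T.erase t, c i := (Finset.add_sum_erase T c hmem).symm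
      _ ≤ c n + ∑ j ∈ Finset.range n, c j := add_le_add (hmono n t hnt) (ih _ hcard)
      _ = ∑ j ∈ Finset.range (n + 1), c j := by rw [Finset.sum_range_succ]; ring

lemma geom_finset_le (T : Finset ℕ) : ∑ k ∈ T, ((1:ℝ)/2) ^ k ≤ 2 := by
  have h := Summable.sum_le_tsum (f := fun k : ℕ => ((1:ℝ)/2) ^ k) T
    (fun i _ => by positivity) summable_geometric_two
  rw [tsum_geometric_two] at h
  exact h

lemma sumA (lam : ℕ → ℝ) (hmono : Monotone lam) (hpos : 0 < lam 0)
    (mk qk : ℕ → ℕ) (hqm : ∀ k, qk k ≤ mk k)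
    (H : ℕ → ℝ) (hH0 : ∀ k, 0 ≤ H k)
    (hH : ∀ k, H k * ∑ j ∈ Finset.range (mk k), 1 / lam j ≤ (1/2) ^ k)
    (m : ℕ) (K : ℕ → ℕ) (e : ℕ → ℝ)
    (hinj : ∀ i < m, ∀ i' < m, Int.fract (e i) = Int.fract (e i') → i = i') :
    ∑ i ∈ Finset.range m,
      (if ∃ j : ℕ, j < qk (K i) ∧ Int.fract (e i) = (2 * (j:ℝ) + 1) / (mk (K i) : ℝ)
       then H (K i) else 0) / lam i ≤ 2 := by
  classical
  have hlampos : ∀ i, 0 < lam i := fun i => lt_of_lt_of_le hpos (hmono (Nat.zero_le i))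
  set P : ℕ → Prop :=
    fun i => ∃ j : ℕ, j < qk (K i) ∧ Int.fract (e i) = (2 * (j:ℝ) + 1) / (mk (K i) : ℝ)
    with hPdef
  set T : Finset ℕ := (Finset.range m).filter P with hT
  have step0 : ∀ i, (if P i then H (K i) else 0) / lam i
      = if P i then H (K i) / lam i else 0 := by
    intro i; by_cases h : P i <;> simp [h]
  calc ∑ i ∈ Finset.range m, (if P i then H (K i) else 0) / lam i
      = ∑ i ∈ T, H (K i) / lam i := by
        rw [Finset.sum_congr rfl (fun i _ => step0 i), hT, Finset.sum_filter]
    _ = ∑ k ∈ T.image K, ∑ i ∈ T.filter (fun i => K i = k), H (K i) / lam i :=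
        (Finset.sum_fiberwise_of_maps_to (fun i hi => Finset.mem_image_of_mem K hi) _).symm
    _ ≤ ∑ k ∈ T.image K, (1/2)^k := by
        refine Finset.sum_le_sum fun k _ => ?_
        set Tk : Finset ℕ := T.filter (fun i => K i = k) with hTk
        have hKk : ∀ i ∈ Tk, K i = k := fun i hi => (Finset.mem_filter.mp hi).2
        have hPk : ∀ i ∈ Tk, P i := fun i hi =>
          (Finset.mem_filter.mp (Finset.mem_filter.mp hi).1).2
        have hmk : ∀ i ∈ Tk, i < m := fun i hi =>
          Finset.mem_range.mp (Finset.mem_filter.mp (Finset.mem_filter.mp hi).1).1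
        -- the index map
        have hcard : Tk.card ≤ qk k := by
          have hψ : ∀ i ∈ Tk, ∃ j : ℕ, j < qk k ∧
              Int.fract (e i) = (2 * (j:ℝ) + 1) / (mk k : ℝ) := by
            intro i hi
            obtain ⟨j, hj1, hj2⟩ := hPk i hi
            rw [hKk i hi] at hj1 hj2
            exact ⟨j, hj1, hj2⟩
          set ψ : ℕ → ℕ := fun i => if h : i ∈ Tk then (hψ i h).choose else 0 with hψdef
          have hspec : ∀ i (hi : i ∈ Tk), ψ i < qk k ∧
              Int.fract (e i) = (2 * (ψ i : ℝ) + 1) / (mk k : ℝ) := by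
            intro i hi
            have := (hψ i hi).choose_spec
            simpa [hψdef, dif_pos hi] using this
          have hinj2 : Set.InjOn ψ ↑Tk := by
            intro i hi i' hi' heq
            simp only [Finset.mem_coe] at hi hi'
            apply hinj i (hmk i hi) i' (hmk i' hi')
            rw [(hspec i hi).2, (hspec i' hi').2, heq]
          have hc2 := Finset.card_le_card_of_injOn (t := Finset.range (qk k)) ψ
            (fun i hi => Finset.mem_range.mpr (hspec i hi).1) hinj2
          simpa using hc2
        calc ∑ i ∈ Tk, H (K i) / lam i
            = H k * ∑ i ∈ Tk, 1 / lam i := by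
              rw [Finset.mul_sum]
              refine Finset.sum_congr rfl fun i hi => ?_
              rw [hKk i hi]; field_simp
          _ ≤ H k * ∑ j ∈ Finset.range (mk k), 1 / lam j := by
              apply mul_le_mul_of_nonneg_left _ (hH0 k)
              calc ∑ i ∈ Tk, 1 / lam i
                  ≤ ∑ j ∈ Finset.range Tk.card, 1 / lam j := by
                    apply antitone_sum_le
                    intro i j hij
                    exact one_div_le_one_div_of_le (hlampos i) (hmono hij)
                _ ≤ ∑ j ∈ Finset.range (mk k), 1 / lam j := by
                    apply Finset.sum_le_sum_of_subset_of_nonneg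
                    · exact Finset.range_subset_range.mpr (le_trans hcard (hqm k))
                    · intro j _ _
                      exact one_div_nonneg.mpr (hlampos j).le
          _ ≤ (1/2)^k := hH k
    _ ≤ 2 := geom_finset_le _

open Classical in
lemma sumB (lam : ℕ → ℝ) (hmono : Monotone lam) (hpos : 0 < lam 0)
    (H : ℕ → ℝ) (hH0 : ∀ k, 0 ≤ H k) (hH : ∀ k, H k ≤ (1/2) ^ k * lam 0)
    (m : ℕ) (e : ℕ → ℝ)
    (hinj : ∀ i < m, ∀ i' < m, Int.fract (e i) = Int.fract (e i') → i = i') :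
    ∑ i ∈ Finset.range m,
      (if hy : ∃ k : ℕ, Int.fract (e i) = 1 / ((k:ℝ) + 2) then H hy.choose else 0)
        / lam i ≤ 2 := by
  classical
  have hlampos : ∀ i, 0 < lam i := fun i => lt_of_lt_of_le hpos (hmono (Nat.zero_le i))
  set P : ℕ → Prop := fun i => ∃ k : ℕ, Int.fract (e i) = 1 / ((k:ℝ) + 2) with hPdef
  set K : ℕ → ℕ := fun i => if hy : P i then hy.choose else 0 with hKdef
  have hKspec : ∀ i (h : P i), Int.fract (e i) = 1 / ((K i : ℝ) + 2) := by
    intro i h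
    have := h.choose_spec
    simpa [hKdef, dif_pos h] using this
  set T : Finset ℕ := (Finset.range m).filter P with hT
  have step0 : ∀ i, (if hy : P i then H hy.choose else 0) / lam i
      = if P i then H (K i) / lam i else 0 := by
    intro i
    by_cases h : P i
    · rw [dif_pos h, if_pos h, hKdef]; simp [dif_pos h]
    · simp [h]
  calc ∑ i ∈ Finset.range m, (if hy : P i then H hy.choose else 0) / lam i
      = ∑ i ∈ T, H (K i) / lam i := by
        rw [Finset.sum_congr rfl (fun i _ => step0 i), hT, Finset.sum_filter]
    _ ≤ ∑ i ∈ T, ((1:ℝ)/2) ^ (K i) := by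
        refine Finset.sum_le_sum fun i _ => ?_
        calc H (K i) / lam i ≤ ((1/2) ^ (K i) * lam 0) / lam 0 :=
              div_le_div₀ (mul_nonneg (by positivity) hpos.le) (hH _) hpos
                (hmono (Nat.zero_le i))
          _ = (1/2) ^ (K i) := by field_simp
    _ = ∑ k ∈ T.image K, ((1:ℝ)/2) ^ k := by
        rw [Finset.sum_image]
        intro i hi i' hi' heq
        have hPi : P i := (Finset.mem_filter.mp hi).2
        have hPi' : P i' := (Finset.mem_filter.mp hi').2
        apply hinj i (Finset.mem_range.mp (Finset.mem_filter.mp hi).1)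
          i' (Finset.mem_range.mp (Finset.mem_filter.mp hi').1)
        rw [hKspec i hPi, hKspec i' hPi', heq]
    _ ≤ 2 := geom_finset_le _

/-- Theorem 1, necessity: if `∑ 1/λ_n = ∞` and
`limsup_n sup_{1 ≤ m ≤ 2^n} m^{1/p(n)} / ∑_{j=1}^m 1/λ_j = ∞`, then there is a
1-periodic (in each variable) function in `Λ^{#}BV` which is not in `BV^{#}(p(n) ↑ ∞)`. -/
theorem exists_lamSharpBV_not_bvSharp
    (lam : ℕ → ℝ) (hmono : Monotone lam) (hlam1 : 1 < lam 0)
    (hdiv : Filter.Tendsto (fun m => ∑ j ∈ Finset.range m, 1 / lam j)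
      Filter.atTop Filter.atTop)
    (p : ℕ → ℝ) (hp1 : ∀ n, 1 ≤ p n) (hpmono : Monotone p)
    (hptop : Filter.Tendsto p Filter.atTop Filter.atTop)
    (hunbdd : ∀ C : ℝ, ∃ n m : ℕ, 1 ≤ m ∧ m ≤ 2 ^ n ∧
      C < (m : ℝ) ^ (1 / p n) / ∑ j ∈ Finset.range m, 1 / lam j) :
    ∃ f : ℝ → ℝ → ℝ,
      (∀ x y : ℝ, f (x + 1) y = f x y ∧ f x (y + 1) = f x y) ∧
      LamSharpBV lam f ∧ ¬ BVSharp p f := by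
  classical
  have hlam0 : (0:ℝ) < lam 0 := lt_trans one_pos hlam1
  have hlampos : ∀ i, 0 < lam i := fun i => lt_of_lt_of_le hlam0 (hmono (Nat.zero_le i))
  have hex : ∀ k : ℕ, ∃ nmp : ℕ × ℕ, 1 ≤ nmp.2 ∧ nmp.2 ≤ 2 ^ nmp.1 ∧
      lam 0 * (((k:ℝ) + 1) * 2 ^ (k + 2)) <
        (nmp.2 : ℝ) ^ (1 / p nmp.1) / ∑ j ∈ Finset.range nmp.2, 1 / lam j := by
    intro k
    obtain ⟨n, m, h1, h2, h3⟩ := hunbdd (lam 0 * (((k:ℝ) + 1) * 2 ^ (k + 2)))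
    exact ⟨(n, m), h1, h2, h3⟩
  choose nmp hnmp using hex
  set N : ℕ → ℕ := fun k => (nmp k).1 with hNdef
  set Mk : ℕ → ℕ := fun k => (nmp k).2 with hMkdef
  set Q : ℕ → ℕ := fun k => Mk k / 2 with hQdef
  set H : ℕ → ℝ := fun k => (1/2 : ℝ) ^ k / ∑ j ∈ Finset.range (Mk k), 1 / lam j
    with hHdef
  have hM1 : ∀ k, 1 ≤ Mk k := fun k => (hnmp k).1
  have hM2 : ∀ k, Mk k ≤ 2 ^ N k := fun k => (hnmp k).2.1
  have hrat : ∀ k : ℕ, lam 0 * (((k:ℝ) + 1) * 2 ^ (k + 2)) <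
      (Mk k : ℝ) ^ (1 / p (N k)) / ∑ j ∈ Finset.range (Mk k), 1 / lam j :=
    fun k => (hnmp k).2.2
  have hLlow : ∀ k, 1 / lam 0 ≤ ∑ j ∈ Finset.range (Mk k), 1 / lam j := by
    intro k
    have h0 : (0:ℕ) ∈ Finset.range (Mk k) := Finset.mem_range.mpr (hM1 k)
    exact Finset.single_le_sum
      (f := fun j => 1 / lam j)
      (fun j _ => one_div_nonneg.mpr (hlampos j).le) h0
  have hLpos : ∀ k, 0 < ∑ j ∈ Finset.range (Mk k), 1 / lam j :=
    fun k => lt_of_lt_of_le (by positivity) (hLlow k)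
  have hH0 : ∀ k, 0 ≤ H k := by
    intro k
    rw [hHdef]
    exact le_of_lt (div_pos (by positivity) (hLpos k))
  have hHprod : ∀ k, H k * ∑ j ∈ Finset.range (Mk k), 1 / lam j ≤ (1/2) ^ k := by
    intro k
    rw [hHdef]
    exact le_of_eq (div_mul_cancel₀ _ (ne_of_gt (hLpos k)))
  have hHle : ∀ k, H k ≤ (1/2) ^ k * lam 0 := by
    intro k
    rw [hHdef]
    calc ((1:ℝ)/2) ^ k / ∑ j ∈ Finset.range (Mk k), 1 / lam j
        ≤ (1/2) ^ k / (1 / lam 0) := by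
          apply div_le_div_of_nonneg_left (by positivity) (by positivity) (hLlow k)
      _ = (1/2) ^ k * lam 0 := by field_simp
  refine ⟨Ffun H Mk Q, fun x y => ⟨Ffun_per1 H Mk Q x y, Ffun_per2 H Mk Q x y⟩, ?_, ?_⟩
  · -- membership in Λ#BV with M = 4
    refine ⟨4, ?_, ?_⟩
    · -- V1
      intro m a b y hno hy
      set K : ℕ → ℕ := fun i =>
        if hy' : ∃ k : ℕ, Int.fract (y i) = 1 / ((k:ℝ) + 2) then hy'.choose else 0
        with hKdef
      have key : ∀ i, |Ffun H Mk Q (b i) (y i) - Ffun H Mk Q (a i) (y i)| ≤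
          (if ∃ j : ℕ, j < Q (K i) ∧ Int.fract (b i) = (2*(j:ℝ)+1)/(Mk (K i):ℝ)
            then H (K i) else 0)
          + (if ∃ j : ℕ, j < Q (K i) ∧ Int.fract (a i) = (2*(j:ℝ)+1)/(Mk (K i):ℝ)
            then H (K i) else 0) := by
        intro i
        unfold Ffun
        by_cases hy' : ∃ k : ℕ, Int.fract (y i) = 1 / ((k:ℝ) + 2)
        · rw [dif_pos hy', dif_pos hy']
          have hKi : hy'.choose = K i := by
            simp only [hKdef]
            rw [dif_pos hy']
          rw [hKi]
          exact Gfun_sub_le (hH0 _) _ _ _ _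
        · rw [dif_neg hy', dif_neg hy']
          have hA : (0:ℝ) ≤ if ∃ j : ℕ, j < Q (K i) ∧
              Int.fract (a i) = (2*(j:ℝ)+1)/(Mk (K i):ℝ) then H (K i) else 0 := by
            split_ifs; exacts [hH0 _, le_refl 0]
          have hB : (0:ℝ) ≤ if ∃ j : ℕ, j < Q (K i) ∧
              Int.fract (b i) = (2*(j:ℝ)+1)/(Mk (K i):ℝ) then H (K i) else 0 := by
            split_ifs; exacts [hH0 _, le_refl 0]
          simpa using add_nonneg hB hA
      calc ∑ i ∈ Finset.range m,
            |Ffun H Mk Q (b i) (y i) - Ffun H Mk Q (a i) (y i)| / lam i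
          ≤ ∑ i ∈ Finset.range m,
            (((if ∃ j : ℕ, j < Q (K i) ∧ Int.fract (b i) = (2*(j:ℝ)+1)/(Mk (K i):ℝ)
                then H (K i) else 0)
              + (if ∃ j : ℕ, j < Q (K i) ∧ Int.fract (a i) = (2*(j:ℝ)+1)/(Mk (K i):ℝ)
                then H (K i) else 0)) / lam i) := by
            refine Finset.sum_le_sum fun i _ => ?_
            exact (div_le_div_iff_of_pos_right (hlampos i)).mpr (key i)
        _ = (∑ i ∈ Finset.range m,
              (if ∃ j : ℕ, j < Q (K i) ∧ Int.fract (b i) = (2*(j:ℝ)+1)/(Mk (K i):ℝ)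
                then H (K i) else 0) / lam i)
            + ∑ i ∈ Finset.range m,
              (if ∃ j : ℕ, j < Q (K i) ∧ Int.fract (a i) = (2*(j:ℝ)+1)/(Mk (K i):ℝ)
                then H (K i) else 0) / lam i := by
            rw [← Finset.sum_add_distrib]
            exact Finset.sum_congr rfl fun i _ => add_div _ _ _
        _ ≤ 2 + 2 := by
            refine add_le_add ?_ ?_
            · exact sumA lam hmono hlam0 Mk Q (fun k => Nat.div_le_self _ _) H hH0
                hHprod m K b (nonoverlap_fract_b hno)
            · exact sumA lam hmono hlam0 Mk Q (fun k => Nat.div_le_self _ _) H hH0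
                hHprod m K a (nonoverlap_fract_a hno)
        _ = 4 := by norm_num
    · -- V2
      intro m a b x hno hx
      have key : ∀ u v : ℝ, |Ffun H Mk Q u v| ≤
          (if hy : ∃ k : ℕ, Int.fract v = 1/((k:ℝ)+2) then H hy.choose else 0) := by
        intro u v
        unfold Ffun
        by_cases hy : ∃ k : ℕ, Int.fract v = 1/((k:ℝ)+2)
        · rw [dif_pos hy, dif_pos hy]
          exact abs_Gfun_le (hH0 _) _ _ _
        · rw [dif_neg hy, dif_neg hy]
          simp
      calc ∑ i ∈ Finset.range m,
            |Ffun H Mk Q (x i) (b i) - Ffun H Mk Q (x i) (a i)| / lam i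
          ≤ ∑ i ∈ Finset.range m,
            (((if hy : ∃ k : ℕ, Int.fract (b i) = 1/((k:ℝ)+2) then H hy.choose else 0)
              + (if hy : ∃ k : ℕ, Int.fract (a i) = 1/((k:ℝ)+2) then H hy.choose else 0))
              / lam i) := by
            refine Finset.sum_le_sum fun i _ => ?_
            refine (div_le_div_iff_of_pos_right (hlampos i)).mpr ?_
            calc |Ffun H Mk Q (x i) (b i) - Ffun H Mk Q (x i) (a i)|
                ≤ |Ffun H Mk Q (x i) (b i)| + |Ffun H Mk Q (x i) (a i)| :=
                  abs_sub _ _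
              _ ≤ _ := add_le_add (key _ _) (key _ _)
        _ = (∑ i ∈ Finset.range m,
              (if hy : ∃ k : ℕ, Int.fract (b i) = 1/((k:ℝ)+2) then H hy.choose else 0)
                / lam i)
            + ∑ i ∈ Finset.range m,
              (if hy : ∃ k : ℕ, Int.fract (a i) = 1/((k:ℝ)+2) then H hy.choose else 0)
                / lam i := by
            rw [← Finset.sum_add_distrib]
            exact Finset.sum_congr rfl fun i _ => add_div _ _ _
        _ ≤ 2 + 2 := by
            refine add_le_add ?_ ?_
            · exact sumB lam hmono hlam0 H hH0 hHle m b (nonoverlap_fract_b hno)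
            · exact sumB lam hmono hlam0 H hH0 hHle m a (nonoverlap_fract_a hno)
        _ = 4 := by norm_num
  · -- not in BV#
    rintro ⟨Mb, hV1, -⟩
    obtain ⟨k, hk⟩ := exists_nat_gt Mb
    have hP1 : 1 ≤ p (N k) := hp1 _
    have hP0 : 0 < p (N k) := lt_of_lt_of_le one_pos hP1
    have hMk1 : (1:ℝ) ≤ (Mk k : ℝ) := by exact_mod_cast hM1 k
    have hMkpos : (0:ℝ) < (Mk k : ℝ) := lt_of_lt_of_le one_pos hMk1
    -- Mk k is large
    have hup : (Mk k : ℝ) ^ (1 / p (N k)) / (∑ j ∈ Finset.range (Mk k), 1 / lam j)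
        ≤ (Mk k : ℝ) * lam 0 := by
      have h1 : (Mk k : ℝ) ^ (1 / p (N k)) ≤ (Mk k : ℝ) := by
        have h2 : 1 / p (N k) ≤ 1 := by
          rw [div_le_one hP0]; exact hP1
        have := Real.rpow_le_rpow_of_exponent_le hMk1 h2
        simpa [Real.rpow_one] using this
      calc (Mk k : ℝ) ^ (1 / p (N k)) / (∑ j ∈ Finset.range (Mk k), 1 / lam j)
          ≤ (Mk k : ℝ) ^ (1 / p (N k)) / (1 / lam 0) := by
            apply div_le_div_of_nonneg_left _ (by positivity) (hLlow k)
            exact Real.rpow_nonneg (le_of_lt hMkpos) _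
        _ = (Mk k : ℝ) ^ (1 / p (N k)) * lam 0 := by field_simp
        _ ≤ (Mk k : ℝ) * lam 0 := mul_le_mul_of_nonneg_right h1 hlam0.le
    have hbig : ((k:ℝ) + 1) * 2 ^ (k + 2) < (Mk k : ℝ) := by
      have h1 := lt_of_lt_of_le (hrat k) hup
      have h2 : (0:ℝ) < ((k:ℝ) + 1) * 2 ^ (k + 2) := by positivity
      nlinarith [hlam0]
    have h4le : (4:ℝ) ≤ 2 ^ (k + 2) := by
      calc (4:ℝ) = 2 ^ 2 := by norm_num
        _ ≤ 2 ^ (k + 2) := pow_le_pow_right₀ (by norm_num) (by omega)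
    have hMk4 : (4:ℝ) < (Mk k : ℝ) := by nlinarith [Nat.cast_nonneg (α := ℝ) k]
    have hMknat4 : 4 < Mk k := by exact_mod_cast hMk4
    have hQnat : 2 * Q k ≤ Mk k ∧ Mk k ≤ 2 * Q k + 1 ∧ 1 ≤ Q k := by
      have hqe : Q k = Mk k / 2 := rfl
      omega
    have hQr : (Mk k : ℝ) / 4 ≤ (Q k : ℝ) := by
      have h1 : (Mk k : ℝ) ≤ 2 * (Q k : ℝ) + 1 := by exact_mod_cast hQnat.2.1
      have h2 : (1:ℝ) ≤ (Q k : ℝ) := by exact_mod_cast hQnat.2.2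
      linarith
    -- the test configuration
    set A : ℕ → ℝ := fun i => (2*(i:ℝ)) / (Mk k : ℝ) with hAdef
    set B : ℕ → ℝ := fun i => (2*(i:ℝ)+1) / (Mk k : ℝ) with hBdef
    have hcast : ∀ i < Q k, 2*(i:ℝ) + 2 ≤ (Mk k : ℝ) := by
      intro i hi
      have h1 : 2 * i + 2 ≤ Mk k := by omega
      exact_mod_cast h1
    have hno : Nonoverlap (Q k) A B := by
      constructor
      · intro i hi
        have h1 := hcast i hi
        refine ⟨by positivity, ?_, ?_⟩
        · rw [hAdef, hBdef]
          exact (div_lt_div_iff_of_pos_right hMkpos).mpr (by linarith)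
        · rw [hBdef, div_le_one hMkpos]; linarith
      · have key : ∀ i j, i < j → j < Q k →
            Set.Ioo (A i) (B i) ∩ Set.Ioo (A j) (B j) = ∅ := by
          intro i j hij hj
          apply Set.eq_empty_iff_forall_notMem.mpr
          rintro z ⟨⟨_, hz1⟩, hz2, _⟩
          have hc : (2*(i:ℝ)+1) ≤ 2*(j:ℝ) := by
            have : 2*i+1 ≤ 2*j := by omega
            exact_mod_cast this
          have hBA : B i ≤ A j := by
            rw [hAdef, hBdef]
            exact (div_le_div_iff_of_pos_right hMkpos).mpr hc
          simp only [hAdef, hBdef] at hz1 hz2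
          simp only [hAdef, hBdef] at hBA
          linarith
        intro i hi j hj hne
        rcases Nat.lt_or_ge i j with h | h
        · exact key i j h hj
        · have hji : j < i := by omega
          rw [Set.inter_comm]
          exact key j i hji hi
    have hlen : ∀ i < Q k, 1 / 2 ^ (N k) ≤ B i - A i := by
      intro i _
      have h1 : B i - A i = 1 / (Mk k : ℝ) := by
        rw [hAdef, hBdef, div_sub_div_same]; ring_nf
      rw [h1]
      apply one_div_le_one_div_of_le hMkpos
      exact_mod_cast hM2 k
    have hymem : ∀ i < Q k, (1:ℝ)/((k:ℝ)+2) ∈ Set.Icc (0:ℝ) 1 := by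
      intro i _
      constructor
      · positivity
      · rw [div_le_one (by positivity)]
        have : (0:ℝ) ≤ (k:ℝ) := Nat.cast_nonneg k
        linarith
    have hfB : ∀ i < Q k, Ffun H Mk Q (B i) ((1:ℝ)/((k:ℝ)+2)) = H k := by
      intro i hi
      rw [Ffun_eval]
      unfold Gfun
      rw [if_pos]
      refine ⟨i, hi, ?_⟩
      rw [hBdef, Int.fract_eq_self.mpr ⟨by positivity, ?_⟩]
      rw [div_lt_one hMkpos]
      have := hcast i hi
      linarith
    have hfA : ∀ i < Q k, Ffun H Mk Q (A i) ((1:ℝ)/((k:ℝ)+2)) = 0 := by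
      intro i hi
      rw [Ffun_eval]
      unfold Gfun
      rw [if_neg]
      rintro ⟨j, hj, hfr⟩
      have hAlt : A i < 1 := by
        rw [hAdef, div_lt_one hMkpos]
        have := hcast i hi
        linarith
      have hA0 : 0 ≤ A i := by rw [hAdef]; positivity
      rw [Int.fract_eq_self.mpr ⟨hA0, hAlt⟩, hAdef] at hfr
      rw [div_eq_div_iff (ne_of_gt hMkpos) (ne_of_gt hMkpos)] at hfr
      have h1 : 2*(i:ℝ) = 2*(j:ℝ)+1 := mul_right_cancel₀ (ne_of_gt hMkpos) hfr
      have h2 : (2*i : ℕ) = 2*j+1 := by exact_mod_cast h1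
      omega
    have hVle := hV1 (N k) (Q k) A B (fun _ => (1:ℝ)/((k:ℝ)+2)) hno hlen
      (fun i hi => hymem i hi)
    have hsum : ∑ i ∈ Finset.range (Q k),
        |Ffun H Mk Q (B i) ((1:ℝ)/((k:ℝ)+2)) - Ffun H Mk Q (A i) ((1:ℝ)/((k:ℝ)+2))|
          ^ p (N k) = (Q k : ℝ) * H k ^ p (N k) := by
      rw [Finset.sum_congr rfl (fun i hi => by
        rw [hfB i (Finset.mem_range.mp hi), hfA i (Finset.mem_range.mp hi), sub_zero,
          abs_of_nonneg (hH0 k)])]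
      rw [Finset.sum_const, Finset.card_range, nsmul_eq_mul]
    rw [hsum] at hVle
    -- now derive a contradiction
    have hcalc : ((Q k : ℝ) * H k ^ p (N k)) ^ (1 / p (N k))
        = (Q k : ℝ) ^ (1 / p (N k)) * H k := by
      rw [Real.mul_rpow (Nat.cast_nonneg _) (Real.rpow_nonneg (hH0 k) _)]
      congr 1
      rw [← Real.rpow_mul (hH0 k), mul_one_div_cancel (ne_of_gt hP0), Real.rpow_one]
    rw [hcalc] at hVle
    have hQpow : (Mk k : ℝ) ^ (1 / p (N k)) * (1/4) ≤ (Q k : ℝ) ^ (1 / p (N k)) := by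
      have e1 : ((Mk k : ℝ) / 4) ^ (1 / p (N k))
          = (Mk k : ℝ) ^ (1 / p (N k)) * ((1:ℝ)/4) ^ (1 / p (N k)) := by
        rw [div_eq_mul_one_div]
        exact Real.mul_rpow (le_of_lt hMkpos) (by norm_num)
      have e2 : ((1:ℝ)/4) ≤ ((1:ℝ)/4) ^ (1 / p (N k)) := by
        have h2 : 1 / p (N k) ≤ 1 := by rw [div_le_one hP0]; exact hP1
        have := Real.rpow_le_rpow_of_exponent_ge (by norm_num : (0:ℝ) < 1/4)
          (by norm_num : (1:ℝ)/4 ≤ 1) h2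
        simpa [Real.rpow_one] using this
      calc (Mk k : ℝ) ^ (1 / p (N k)) * (1/4)
          ≤ (Mk k : ℝ) ^ (1 / p (N k)) * ((1:ℝ)/4) ^ (1 / p (N k)) :=
            mul_le_mul_of_nonneg_left e2 (Real.rpow_nonneg (le_of_lt hMkpos) _)
        _ = ((Mk k : ℝ) / 4) ^ (1 / p (N k)) := e1.symm
        _ ≤ (Q k : ℝ) ^ (1 / p (N k)) :=
            Real.rpow_le_rpow (by positivity) hQr (by positivity)
    have hMH : lam 0 * (((k:ℝ)+1)) * 4 < (Mk k : ℝ) ^ (1 / p (N k)) * H k := by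
      have h1 := mul_lt_mul_of_pos_right (hrat k) (show (0:ℝ) < (1/2)^k by positivity)
      have e1 : (Mk k : ℝ) ^ (1 / p (N k)) / (∑ j ∈ Finset.range (Mk k), 1 / lam j)
          * (1/2)^k = (Mk k : ℝ) ^ (1 / p (N k)) * H k := by
        rw [hHdef]; ring
      have e2 : (2:ℝ) ^ (k+2) * (1/2)^k = 4 := by
        have h2k : (2:ℝ)^k ≠ 0 := by positivity
        rw [pow_add, one_div, inv_pow]
        field_simp
        ring
      rw [e1] at h1
      calc lam 0 * (((k:ℝ)+1)) * 4
          = lam 0 * (((k:ℝ)+1) * 2^(k+2)) * (1/2)^k := by rw [mul_assoc, ← e2]; ring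
        _ < (Mk k : ℝ) ^ (1 / p (N k)) * H k := h1
    have hfinal : ((k:ℝ)+1) * lam 0 < (Q k : ℝ) ^ (1 / p (N k)) * H k := by
      have h1 : (Mk k : ℝ) ^ (1 / p (N k)) * (1/4) * H k
          ≤ (Q k : ℝ) ^ (1 / p (N k)) * H k :=
        mul_le_mul_of_nonneg_right hQpow (hH0 k)
      linarith [hMH, h1]
    have hkk : (Mb:ℝ) < (k:ℝ) := hk
    have hk1 : ((k:ℝ)+1) * 1 ≤ ((k:ℝ)+1) * lam 0 :=
      mul_le_mul_of_nonneg_left hlam1.le (by positivity)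
    linarith [hVle, hfinal, hkk, hk1]
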